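/- For all 0 ≤ k ≤ n, W_{m,r,q}(n,k) = q^{C(k,2)} times the sum over all weakly increasing sequences 0 ≤ j_1 ≤ j_2 ≤ ... ≤ j_{n-k} ≤ k of the products ∏_{i=1}^{n-k} (m[j_i]_q + r). -/

import Mathlib

open Finset

noncomputable def qint (q : ℂ) (n : ℕ) : ℂ := (q ^ n - 1) / (q - 1)

/-- (q,r)-Whitney numbers of the first kind, via the triangular recurrence
`w(n+1,k) = q^{-n} (w(n,k-1) - (m[n]_q + r) w(n,k))`, with `w(0,0)=1` and
`w(n,k)=0` for `k>n` (the `k<0` values are zero, absorbed in the `k=0` case). -/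
noncomputable def qw (q m r : ℂ) : ℕ → ℕ → ℂ
  | 0, 0 => 1
  | 0, _ + 1 => 0
  | n + 1, 0 => q ^ (-(n : ℤ)) * (0 - (m * qint q n + r) * qw q m r n 0)
  | n + 1, k + 1 => q ^ (-(n : ℤ)) * (qw q m r n k - (m * qint q n + r) * qw q m r n (k + 1))

/-- (q,r)-Whitney numbers of the second kind, via
`W(n+1,k) = q^{k-1} W(n,k-1) + (m[k]_q + r) W(n,k)`, with `W(0,0)=1`. -/
noncomputable def qW (q m r : ℂ) : ℕ → ℕ → ℂ
  | 0, 0 => 1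
  | 0, _ + 1 => 0
  | n + 1, 0 => (m * qint q 0 + r) * qW q m r n 0
  | n + 1, k + 1 => q ^ k * qW q m r n k + (m * qint q (k + 1) + r) * qW q m r n (k + 1)


open Classical in
noncomputable def Tsum (c : ℕ → ℂ) (a b : ℕ) : ℂ :=
  ∑ f ∈ Finset.univ.filter (fun f : Fin a → Fin (b+1) => Monotone f), ∏ i, c (f i)

lemma Tsum_zero_left (c : ℕ → ℂ) (b : ℕ) : Tsum c 0 b = 1 := by
  unfold Tsum
  have h : ∀ f ∈ (Finset.univ : Finset (Fin 0 → Fin (b+1))), Monotone f := by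
    intro f _ i j hij; exact i.elim0
  rw [Finset.filter_true_of_mem h]
  simp

lemma Tsum_zero_right (c : ℕ → ℂ) (a : ℕ) : Tsum c a 0 = c 0 ^ a := by
  unfold Tsum
  have h : ∀ f ∈ (Finset.univ : Finset (Fin a → Fin 1)), Monotone f := by
    intro f _ i j hij; exact le_of_eq (Subsingleton.elim _ _)
  rw [Finset.filter_true_of_mem h]
  rw [Finset.univ_unique, Finset.sum_singleton]
  have h2 : ∀ i : Fin a, ((default : Fin a → Fin 1) i : ℕ) = 0 := by
    intro i; simp [Subsingleton.elim ((default : Fin a → Fin 1) i) 0]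
  simp only [h2]
  simp

def toSmall (b : ℕ) (v : Fin (b+2)) : Fin (b+1) :=
  if h : (v : ℕ) < b + 1 then ⟨v, h⟩ else ⟨b, Nat.lt_succ_self b⟩

open Classical in
lemma Tsum_rec (c : ℕ → ℂ) (a b : ℕ) :
    Tsum c (a+1) (b+1) = Tsum c (a+1) b + c (b+1) * Tsum c a (b+1) := by
  unfold Tsum
  rw [← Finset.sum_filter_add_sum_filter_not
    (Finset.univ.filter fun f : Fin (a+1) → Fin (b+2) => Monotone f)
    (fun f => f (Fin.last a) ≠ Fin.last (b+1)) (fun f => ∏ i, c (f i))]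
  congr 1
  · -- values all < last: bijection with monotone maps into Fin (b+1)
    rw [Finset.filter_filter]
    refine Finset.sum_nbij' (fun f k => toSmall b (f k)) (fun g k => (g k).castSucc)
      ?_ ?_ ?_ ?_ ?_
    · intro f hf
      simp only [Finset.mem_filter, Finset.mem_univ, true_and] at hf ⊢
      obtain ⟨hmono, hne⟩ := hf
      have hlt : ∀ k, (f k : ℕ) < b + 1 := by
        intro k
        have h1 : f k ≤ f (Fin.last a) := hmono (Fin.le_last k)
        have h2 : f (Fin.last a) < Fin.last (b+1) :=
          lt_of_le_of_ne (Fin.le_last _) hne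
        have := lt_of_le_of_lt h1 h2
        simpa [Fin.lt_def] using this
      intro i j hij
      have hle := hmono hij
      rw [Fin.le_def] at hle
      rw [Fin.le_def]
      simp only [toSmall, dif_pos (hlt i), dif_pos (hlt j)]
      exact hle
    · intro g hg
      simp only [Finset.mem_filter, Finset.mem_univ, true_and] at hg ⊢
      constructor
      · intro i j hij
        exact Fin.castSucc_le_castSucc_iff.mpr (hg hij)
      · intro hcontra
        have : ((g (Fin.last a)).castSucc : ℕ) = b + 1 := by
          rw [hcontra]; simp
        have h2 : ((g (Fin.last a)).castSucc : ℕ) < b + 1 := by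
          simpa using (g (Fin.last a)).isLt
        omega
    · intro f hf
      simp only [Finset.mem_filter, Finset.mem_univ, true_and] at hf
      obtain ⟨hmono, hne⟩ := hf
      have hlt : ∀ k, (f k : ℕ) < b + 1 := by
        intro k
        have h1 : f k ≤ f (Fin.last a) := hmono (Fin.le_last k)
        have h2 : f (Fin.last a) < Fin.last (b+1) :=
          lt_of_le_of_ne (Fin.le_last _) hne
        have := lt_of_le_of_lt h1 h2
        simpa [Fin.lt_def] using this
      funext k
      apply Fin.ext
      simp [toSmall, hlt k]
    · intro g hg
      funext k
      apply Fin.ext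
      have : ((g k).castSucc : ℕ) < b + 1 := by simpa using (g k).isLt
      simp [toSmall, this, Nat.lt_succ_iff.mp (g k).isLt]
    · intro f hf
      simp only [Finset.mem_filter, Finset.mem_univ, true_and] at hf
      obtain ⟨hmono, hne⟩ := hf
      have hlt : ∀ k, (f k : ℕ) < b + 1 := by
        intro k
        have h1 : f k ≤ f (Fin.last a) := hmono (Fin.le_last k)
        have h2 : f (Fin.last a) < Fin.last (b+1) :=
          lt_of_le_of_ne (Fin.le_last _) hne
        have := lt_of_le_of_lt h1 h2
        simpa [Fin.lt_def] using this
      apply Finset.prod_congr rfl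
      intro k _
      congr 1
      simp [toSmall, hlt k]
  · -- f last = last: factor out c (b+1), bijection with monotone maps Fin a → Fin (b+2)
    rw [Finset.filter_filter, Finset.mul_sum]
    refine Finset.sum_nbij' (fun f => f ∘ Fin.castSucc)
      (fun g => Fin.snoc g (Fin.last (b+1))) ?_ ?_ ?_ ?_ ?_
    · intro f hf
      simp only [Finset.mem_filter, Finset.mem_univ, true_and, not_not] at hf ⊢
      intro i j hij
      exact hf.1 (Fin.castSucc_le_castSucc_iff.mpr hij)
    · intro g hg
      simp only [Finset.mem_filter, Finset.mem_univ, true_and, not_not] at hg ⊢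
      constructor
      · intro i j hij
        rcases Fin.eq_castSucc_or_eq_last j with ⟨j', rfl⟩ | rfl
        · rcases Fin.eq_castSucc_or_eq_last i with ⟨i', rfl⟩ | rfl
          · simp only [Fin.snoc_castSucc]
            exact hg (Fin.castSucc_le_castSucc_iff.mp hij)
          · have : j'.castSucc < Fin.last a := Fin.castSucc_lt_last j'
            exact absurd hij (not_le.mpr this)
        · simp only [Fin.snoc_last]
          exact Fin.le_last _
      · simp
    · intro f hf
      simp only [Finset.mem_filter, Finset.mem_univ, true_and, not_not] at hf
      funext k
      rcases Fin.eq_castSucc_or_eq_last k with ⟨k', rfl⟩ | rfl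
      · simp [Fin.snoc_castSucc]
      · simp [Fin.snoc_last, hf.2]
    · intro g hg
      funext k
      simp [Fin.snoc_castSucc]
    · intro f hf
      simp only [Finset.mem_filter, Finset.mem_univ, true_and, not_not] at hf
      rw [Fin.prod_univ_castSucc (fun i => c (f i))]
      rw [hf.2]
      simp [mul_comm]

lemma qW_eq_zero (q m r : ℂ) : ∀ n k : ℕ, n < k → qW q m r n k = 0 := by
  intro n
  induction n with
  | zero => intro k hk; match k, hk with | k+1, _ => rfl
  | succ n ih =>
    intro k hk
    match k, hk with
    | k+1, hk =>
      show q ^ k * qW q m r n k + (m * qint q (k + 1) + r) * qW q m r n (k + 1) = 0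
      rw [ih k (by omega), ih (k+1) (by omega)]
      ring

lemma qW_eq_Tsum (q m r : ℂ) : ∀ n k : ℕ, k ≤ n →
    qW q m r n k = q ^ k.choose 2 * Tsum (fun j => m * qint q j + r) (n - k) k := by
  intro n
  induction n with
  | zero =>
    intro k hk
    interval_cases k
    simp [qW, Tsum_zero_left]
  | succ n ih =>
    intro k hk
    match k with
    | 0 =>
      show (m * qint q 0 + r) * qW q m r n 0 = _
      rw [ih 0 (Nat.zero_le n)]
      simp only [Nat.choose_self, Tsum_zero_right, Nat.sub_zero]
      show (m * qint q 0 + r) * (q ^ Nat.choose 0 2 * (m * qint q 0 + r) ^ n)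
        = q ^ Nat.choose 0 2 * (m * qint q 0 + r) ^ (n + 1)
      ring
    | k + 1 =>
      show q ^ k * qW q m r n k + (m * qint q (k + 1) + r) * qW q m r n (k + 1) = _
      rcases Nat.lt_or_ge n (k+1) with h | h
      · have hkn : k = n := by omega
        subst hkn
        rw [qW_eq_zero q m r k (k+1) (by omega), ih k le_rfl]
        simp only [Nat.sub_self, Tsum_zero_left, Nat.add_sub_cancel]
        rw [show (k+1).choose 2 = k.choose 2 + k by
          rw [Nat.choose_succ_succ, Nat.choose_one_right, Nat.add_comm]]
        ring
      · rw [ih k (by omega), ih (k+1) h]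
        have hs : n - k = (n - (k+1)) + 1 := by omega
        have hs2 : n + 1 - (k + 1) = (n - (k+1)) + 1 := by omega
        rw [hs2, Tsum_rec, ← hs]
        rw [show (k+1).choose 2 = k.choose 2 + k by
          rw [Nat.choose_succ_succ, Nat.choose_one_right, Nat.add_comm]]
        ring

open Classical in
theorem stmt10 (q m r : ℂ) (hq0 : q ≠ 0) (hq1 : q ≠ 1) (n k : ℕ) (hkn : k ≤ n) :
    qW q m r n k =
      q ^ k.choose 2 *
        ∑ f ∈ Finset.univ.filter (fun f : Fin (n - k) → Fin (k + 1) => Monotone f),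
          ∏ i : Fin (n - k), (m * qint q (f i) + r) := by
  rw [qW_eq_Tsum q m r n k hkn]
  rfl
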